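/- Termination and non-repetition of the second pass: the iterative construction of AllConc(x) — repeatedly taking the smallest pair (e,f) from Conc(x) (ordered by position of the first component), adding it to AllConc(x), removing it, and adding (g,f) for each edge g ≺ e in E(x) — never processes the same pair twice and terminates; moreover every PWR-concurrent conflicting pair (e,f) on x with pos(e) < pos(f) is contained in the resulting AllConc(x). -/

import Mathlib

inductive Op : Type
  | read (x : ℕ)
  | write (x : ℕ)
  | acquire (y : ℕ)
  | release (y : ℕ)
  deriving DecidableEq

structure Event : Type where
  tid : ℕ
  uid : ℕ
  op : Op
  deriving DecidableEq

def Event.isWrite (e : Event) : Prop := ∃ x, e.op = Op.write x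

def Event.isRead (e : Event) : Prop := ∃ x, e.op = Op.read x

def Event.accesses (e : Event) (x : ℕ) : Prop :=
  e.op = Op.read x ∨ e.op = Op.write x

/-- Position of an event in a trace (trace position). -/
def tracePos (T : List Event) (e : Event) : ℕ := List.idxOf e T

/-- Two events conflict: same variable, different threads, at least one write. -/
def Conflict (e f : Event) : Prop :=
  e.tid ≠ f.tid ∧ ∃ x, e.accesses x ∧ f.accesses x ∧ (e.isWrite ∨ f.isWrite)

/-- `w` is the last write (on some variable `x`) seen by the read `r` in `T`. -/
def LastWriteOf (T : List Event) (w r : Event) : Prop :=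
  w ∈ T ∧ r ∈ T ∧ ∃ x, w.op = Op.write x ∧ r.op = Op.read x ∧
    tracePos T w < tracePos T r ∧
    ∀ w' ∈ T, w'.op = Op.write x → tracePos T w' < tracePos T r →
      tracePos T w' ≤ tracePos T w

/-- `a`, `r` form a matching acquire/release pair on lock `y` (a critical section). -/
def IsCS (T : List Event) (y : ℕ) (a r : Event) : Prop :=
  a ∈ T ∧ r ∈ T ∧ a.op = Op.acquire y ∧ r.op = Op.release y ∧ a.tid = r.tid ∧
    tracePos T a < tracePos T r ∧
    ∀ e ∈ T, (e.op = Op.acquire y ∨ e.op = Op.release y) →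
      ¬ (tracePos T a < tracePos T e ∧ tracePos T e < tracePos T r)

/-- Event `e` belongs to the critical section on lock `y` given by `a`, `r`. -/
def InCS (T : List Event) (y : ℕ) (a r e : Event) : Prop :=
  IsCS T y a r ∧ e ∈ T ∧ e.tid = a.tid ∧
    tracePos T a ≤ tracePos T e ∧ tracePos T e ≤ tracePos T r

/-- The lockset of an event: the locks of all critical sections containing it. -/
def Lockset (T : List Event) (e : Event) : Set ℕ := {y | ∃ a r, InCS T y a r e}

/-- Well-formedness of a trace: events are distinct, every release has a matching
acquire, and two acquires on the same lock are separated by a release. -/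
def WellFormed (T : List Event) : Prop :=
  T.Nodup ∧
  (∀ r ∈ T, ∀ y, r.op = Op.release y → ∃ a, IsCS T y a r) ∧
  (∀ a₁ ∈ T, ∀ a₂ ∈ T, ∀ y, a₁.op = Op.acquire y → a₂.op = Op.acquire y →
    tracePos T a₁ < tracePos T a₂ →
    ∃ rl ∈ T, rl.op = Op.release y ∧ rl.tid = a₁.tid ∧
      tracePos T a₁ < tracePos T rl ∧ tracePos T rl < tracePos T a₂)

/-- `T'` is a correctly reordered prefix of `T`. -/
structure CorrectlyReorderedPrefix (T T' : List Event) : Prop where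
  nodup : T'.Nodup
  sub : ∀ e ∈ T', e ∈ T
  programOrder : ∀ i : ℕ,
    (T'.filter (fun e => e.tid = i)) <+: (T.filter (fun e => e.tid = i))
  lastWriter : ∀ r ∈ T', ∀ w, LastWriteOf T w r → w ∈ T' ∧ LastWriteOf T' w r
  lockSemantics : ∀ a₁ ∈ T', ∀ a₂ ∈ T', ∀ y,
    a₁.op = Op.acquire y → a₂.op = Op.acquire y → tracePos T' a₁ < tracePos T' a₂ →
    ∃ rl ∈ T', rl.op = Op.release y ∧ rl.tid = a₁.tid ∧
      tracePos T' a₁ < tracePos T' rl ∧ tracePos T' rl < tracePos T' a₂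

/-- `(e, f)` is a predictable race pair: `e` and `f` conflict and some correctly
reordered prefix of `T` has `e` immediately before `f`. -/
def RacePair (T : List Event) (e f : Event) : Prop :=
  Conflict e f ∧
  ∃ T', CorrectlyReorderedPrefix T T' ∧ ∃ l₁ l₂, T' = l₁ ++ e :: f :: l₂

/-- The PWR relation: smallest partial order closed under program order (PO),
write-read dependency (WRD) and release-order dependency (ROD). -/
inductive PWR (T : List Event) : Event → Event → Prop
  | po {e f : Event} : e ∈ T → f ∈ T → e.tid = f.tid →
      tracePos T e < tracePos T f → PWR T e f
  | wrd {w r : Event} : LastWriteOf T w r → PWR T w r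
  | rod {y : ℕ} {a rl a' rl' e f : Event} :
      InCS T y a rl e → InCS T y a' rl' f → a ≠ a' → PWR T e f → PWR T rl f
  | trans {e f g : Event} : PWR T e f → PWR T f g → PWR T e g

open Classical


/-- One step of the first pass of the PWR algorithm for variable `x`.
The state is `(RW(x), E(x), Conc(x))`. -/
noncomputable def stepRW (T : List Event) (x : ℕ)
    (st : List Event × List (Event × Event) × List (Event × Event)) (f : Event) :
    List Event × List (Event × Event) × List (Event × Event) :=
  if f.accesses x then
    (f :: st.1.filter (fun g => !decide (PWR T g f)),
     st.2.1 ++ (st.1.filter (fun g => decide (PWR T g f))).map (fun g => (g, f)),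
     st.2.2 ++ (st.1.filter
       (fun g => !decide (PWR T g f) && !decide (PWR T f g))).map (fun g => (g, f)))
  else st

/-- The first pass of the PWR algorithm: fold over the trace. -/
noncomputable def firstPass (T : List Event) (x : ℕ) :
    List Event × List (Event × Event) × List (Event × Event) :=
  T.foldl (stepRW T x) ([], [], [])

/-- The edge constraints `E(x)` produced by the first pass. -/
noncomputable def edgesOf (T : List Event) (x : ℕ) : List (Event × Event) :=
  (firstPass T x).2.1

/-- The concurrent pairs `Conc(x)` produced by the first pass. -/
noncomputable def concOf (T : List Event) (x : ℕ) : List (Event × Event) :=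
  (firstPass T x).2.2

/-- The set of pairs produced by the second pass: pairs of `Conc(x)` closed
under following edge constraints backwards on the first component. -/
inductive AllConc (T : List Event) (x : ℕ) : Event → Event → Prop
  | base {e f : Event} : (e, f) ∈ concOf T x → AllConc T x e f
  | step {e f g : Event} : AllConc T x e f → (g, e) ∈ edgesOf T x → AllConc T x g f

/-- One step of the second pass: `(g, f)` is derived from `(e, f)` via the
edge constraint `g ≺ e`. -/
def secondPassStep (T : List Event) (x : ℕ) (p q : Event × Event) : Prop :=
  p.2 = q.2 ∧ (p.1, q.1) ∈ edgesOf T x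


section AuxProofs

open List

lemma pos_inj {T : List Event} {a b : Event} (ha : a ∈ T) (hb : b ∈ T)
    (h : tracePos T a = tracePos T b) : a = b :=
  (List.idxOf_inj ha).1 h

lemma pos_lt_of_split {T A l : List Event} {a g : Event} (hN : T.Nodup)
    (hs : T = A ++ a :: l) (hg : g ∈ A) : tracePos T g < tracePos T a := by
  have haA : a ∉ A := by
    intro hmem
    rw [hs, List.nodup_append] at hN
    exact hN.2.2 a hmem a List.mem_cons_self rfl
  subst hs
  show List.idxOf g (A ++ a :: l) < List.idxOf a (A ++ a :: l)
  rw [List.idxOf_append_of_mem hg, List.idxOf_append_of_notMem haA]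
  have := List.idxOf_lt_length_iff.2 hg
  omega

lemma pwr_pos {T : List Event} (hT : WellFormed T) {e f : Event} (h : PWR T e f) :
    e ∈ T ∧ f ∈ T ∧ tracePos T e < tracePos T f := by
  induction h with
  | po he hf _ hp => exact ⟨he, hf, hp⟩
  | wrd h => obtain ⟨hw, hr, x, _, _, hp, _⟩ := h; exact ⟨hw, hr, hp⟩
  | @rod y a rl a' rl' e f h1 h2 hne _ ih =>
    obtain ⟨he, hf, hef⟩ := ih
    obtain ⟨⟨haT, hrlT, haop, hrlop, _, harl, hmax⟩, heT, _, hae, herl⟩ := h1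
    obtain ⟨⟨haT', hrlT', haop', hrlop', _, harl', hmax'⟩, hfT, _, haf', hfrl'⟩ := h2
    refine ⟨hrlT, hf, ?_⟩
    have hane : tracePos T a ≠ tracePos T a' := fun hq => hne (pos_inj haT haT' hq)
    rcases lt_or_gt_of_ne hane with hlt | hgt
    · -- pos a < pos a'
      have h1' := hmax a' haT' (Or.inl haop')
      have hrla' : tracePos T rl ≤ tracePos T a' := by
        by_contra hc
        exact h1' ⟨hlt, by omega⟩
      have hle : tracePos T rl ≤ tracePos T f := le_trans hrla' haf'
      rcases lt_or_eq_of_le hle with hlt2 | heq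
      · exact hlt2
      · exfalso
        have ha'rl : tracePos T a' = tracePos T rl := by omega
        have : a' = rl := pos_inj haT' hrlT ha'rl
        rw [this, hrlop] at haop'
        simp at haop'
    · -- pos a' < pos a
      exfalso
      have h1' := hmax' a haT (Or.inl haop)
      have : tracePos T rl' ≤ tracePos T a := by
        by_contra hc
        exact h1' ⟨hgt, by omega⟩
      omega
  | trans _ _ ih1 ih2 => exact ⟨ih1.1, ih2.2.1, lt_trans ih1.2.2 ih2.2.2⟩

/-- Invariant of the first pass, where `A` is the processed prefix. -/
def FPInv (T : List Event) (x : ℕ) (A : List Event)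
    (st : List Event × List (Event × Event) × List (Event × Event)) : Prop :=
  (∀ g ∈ st.1, g ∈ A ∧ g.accesses x) ∧
  (∀ p ∈ st.2.1, p.1 ∈ A ∧ p.2 ∈ A ∧ p.2.accesses x ∧ PWR T p.1 p.2 ∧
    tracePos T p.1 < tracePos T p.2) ∧
  (∀ p ∈ st.2.2, ¬ PWR T p.1 p.2 ∧ ¬ PWR T p.2 p.1 ∧ tracePos T p.1 < tracePos T p.2) ∧
  (∀ g ∈ A, g.accesses x → g ∈ st.1 ∨ ∃ h, (g, h) ∈ st.2.1)

lemma inv_init (T : List Event) (x : ℕ) : FPInv T x [] ([], [], []) := by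
  refine ⟨?_, ?_, ?_, ?_⟩ <;> intro p hp <;> simp at hp

lemma inv_step {T : List Event} {x : ℕ} {A l : List Event} {a : Event}
    {st : List Event × List (Event × Event) × List (Event × Event)}
    (hN : T.Nodup) (hs : T = A ++ a :: l) (hI : FPInv T x A st) :
    FPInv T x (A ++ [a]) (stepRW T x st a) := by
  obtain ⟨I1, I2, I3, I4⟩ := hI
  unfold stepRW
  split_ifs with ha
  · refine ⟨?_, ?_, ?_, ?_⟩
    · intro g hg
      rcases List.mem_cons.1 hg with rfl | hg'
      · exact ⟨by simp, ha⟩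
      · have h1 := I1 g (List.mem_of_mem_filter hg')
        exact ⟨by simp [h1.1], h1.2⟩
    · intro p hp
      rcases List.mem_append.1 hp with hp | hp
      · obtain ⟨q1, q2, q3, q4, q5⟩ := I2 p hp
        exact ⟨by simp [q1], by simp [q2], q3, q4, q5⟩
      · obtain ⟨g, hg, rfl⟩ := List.mem_map.1 hp
        have hgf := List.mem_filter.1 hg
        have hg1 := I1 g hgf.1
        have hpwr : PWR T g a := of_decide_eq_true hgf.2
        exact ⟨by simp [hg1.1], by simp, ha, hpwr, pos_lt_of_split hN hs hg1.1⟩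
    · intro p hp
      rcases List.mem_append.1 hp with hp | hp
      · exact I3 p hp
      · obtain ⟨g, hg, rfl⟩ := List.mem_map.1 hp
        have hgf := List.mem_filter.1 hg
        have hg1 := I1 g hgf.1
        have h2 := hgf.2
        simp only [Bool.and_eq_true, Bool.not_eq_true', decide_eq_false_iff_not] at h2
        exact ⟨h2.1, h2.2, pos_lt_of_split hN hs hg1.1⟩
    · intro g hg hacc
      rcases List.mem_append.1 hg with hg | hg
      · rcases I4 g hg hacc with hmem | ⟨h, hh⟩
        · by_cases hp : PWR T g a
          · exact Or.inr ⟨a, List.mem_append_right _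
              (List.mem_map.2 ⟨g, List.mem_filter.2 ⟨hmem, decide_eq_true hp⟩, rfl⟩)⟩
          · exact Or.inl (List.mem_cons_of_mem _
              (List.mem_filter.2 ⟨hmem, by simp [decide_eq_false hp]⟩))
        · exact Or.inr ⟨h, List.mem_append_left _ hh⟩
      · have : g = a := by simpa using hg
        subst this
        exact Or.inl List.mem_cons_self
  · refine ⟨?_, ?_, ?_, ?_⟩
    · intro g hg; have h1 := I1 g hg; exact ⟨by simp [h1.1], h1.2⟩
    · intro p hp; obtain ⟨q1, q2, q3, q4, q5⟩ := I2 p hp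
      exact ⟨by simp [q1], by simp [q2], q3, q4, q5⟩
    · exact I3
    · intro g hg hacc
      rcases List.mem_append.1 hg with hg | hg
      · exact I4 g hg hacc
      · have : g = a := by simpa using hg
        subst this
        exact absurd hacc ha

lemma inv_fold {T : List Event} {x : ℕ} (hN : T.Nodup) :
    ∀ (l A : List Event) (st : List Event × List (Event × Event) × List (Event × Event))
      (rest : List Event), T = A ++ l ++ rest → FPInv T x A st →
      FPInv T x (A ++ l) (List.foldl (stepRW T x) st l) := by
  intro l
  induction l with
  | nil =>
    intro A st rest hs hI
    simpa using hI
  | cons a l ih =>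
    intro A st rest hs hI
    have hs' : T = A ++ a :: (l ++ rest) := by simpa using hs
    have h1 := inv_step hN hs' hI
    have h2 := ih (A ++ [a]) (stepRW T x st a) rest (by simpa using hs) h1
    rw [List.foldl_cons]
    have e : (A ++ [a]) ++ l = A ++ a :: l := by simp
    rwa [e] at h2

lemma step_mono (T : List Event) (x : ℕ)
    (st : List Event × List (Event × Event) × List (Event × Event)) (a : Event) :
    st.2.1 ⊆ (stepRW T x st a).2.1 ∧ st.2.2 ⊆ (stepRW T x st a).2.2 := by
  unfold stepRW
  split_ifs with ha
  · exact ⟨List.subset_append_left _ _, List.subset_append_left _ _⟩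
  · exact ⟨List.Subset.refl _, List.Subset.refl _⟩

lemma fold_mono (T : List Event) (x : ℕ) :
    ∀ (l : List Event) (st : List Event × List (Event × Event) × List (Event × Event)),
      st.2.1 ⊆ (List.foldl (stepRW T x) st l).2.1 ∧
      st.2.2 ⊆ (List.foldl (stepRW T x) st l).2.2 := by
  intro l
  induction l with
  | nil => intro st; simp
  | cons a l ih =>
    intro st
    rw [List.foldl_cons]
    exact ⟨List.Subset.trans (step_mono T x st a).1 (ih _).1, List.Subset.trans (step_mono T x st a).2 (ih _).2⟩

lemma inv_final {T : List Event} {x : ℕ} (hN : T.Nodup) :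
    FPInv T x T (firstPass T x) := by
  have := inv_fold (x := x) hN T [] ([], [], []) [] (by simp) (inv_init T x)
  simpa [firstPass] using this

lemma complete_aux {T : List Event} {x : ℕ} (hT : WellFormed T) {A B : List Event} {f : Event}
    (hs : T = A ++ f :: B) (hfacc : f.accesses x) :
    ∀ (k : ℕ) (g : Event), g ∈ A → g.accesses x → tracePos T f - tracePos T g ≤ k →
      ¬ PWR T g f → ¬ PWR T f g → AllConc T x g f := by
  have hN := hT.1
  intro k
  induction k with
  | zero =>
    intro g hg _ hk _ _
    have := pos_lt_of_split hN hs hg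
    omega
  | succ k ih =>
    intro g hg hacc hk hgf hfg
    have hInv : FPInv T x A (List.foldl (stepRW T x) ([], [], []) A) := by
      have := inv_fold (x := x) hN A [] ([], [], []) (f :: B) (by simpa using hs) (inv_init T x)
      simpa using this
    set st := List.foldl (stepRW T x) ([], [], []) A with hst
    obtain ⟨I1, I2, I3, I4⟩ := hInv
    have hfoldE : edgesOf T x = (List.foldl (stepRW T x) (stepRW T x st f) B).2.1 := by
      rw [edgesOf, firstPass, hst, hs, List.foldl_append, List.foldl_cons]
    have hfoldC : concOf T x = (List.foldl (stepRW T x) (stepRW T x st f) B).2.2 := by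
      rw [concOf, firstPass, hst, hs, List.foldl_append, List.foldl_cons]
    rcases I4 g hg hacc with hmem | ⟨h, hh⟩
    · have hpair : (g, f) ∈ (stepRW T x st f).2.2 := by
        unfold stepRW
        rw [if_pos hfacc]
        exact List.mem_append_right _ (List.mem_map.2 ⟨g,
          List.mem_filter.2 ⟨hmem, by simp [decide_eq_false hgf, decide_eq_false hfg]⟩, rfl⟩)
      have : (g, f) ∈ concOf T x := by
        rw [hfoldC]
        exact (fold_mono T x B _).2 hpair
      exact AllConc.base this
    · obtain ⟨hgA, hhA, hhacc, hpwr, hposgh⟩ := I2 (g, h) hh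
      have hposgh' : tracePos T g < tracePos T h := hposgh
      have hedge : (g, h) ∈ edgesOf T x := by
        have h1 : (g, h) ∈ (stepRW T x st f).2.1 := (step_mono T x st f).1 hh
        rw [hfoldE]
        exact (fold_mono T x B _).1 h1
      have hhf : tracePos T h < tracePos T f := pos_lt_of_split hN hs hhA
      have hnhf : ¬ PWR T h f := fun hc => hgf (PWR.trans hpwr hc)
      have hnfh : ¬ PWR T f h := fun hc => by
        have := (pwr_pos hT hc).2.2
        omega
      have hrec := ih h hhA hhacc (by omega) hnhf hnfh
      exact AllConc.step hrec hedge

end AuxProofs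

/-- Termination and non-repetition of the second pass, together with its
completeness: all processed pairs have increasing positions, the step relation
is well-founded (termination), no pair is ever re-processed, and every
PWR-concurrent conflicting pair ends up in `AllConc(x)`. -/
theorem stmt16 (T : List Event) (x : ℕ) (hT : WellFormed T) :
    (∀ e f, AllConc T x e f → tracePos T e < tracePos T f) ∧
    WellFounded (secondPassStep T x) ∧
    (∀ p : Event × Event, ¬ Relation.TransGen (secondPassStep T x) p p) ∧
    (∀ e f, e ∈ T → f ∈ T → Conflict e f → e.accesses x → f.accesses x →
      tracePos T e < tracePos T f → ¬ PWR T e f → ¬ PWR T f e →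
      AllConc T x e f) := by

  have hN := hT.1
  obtain ⟨I1, I2, I3, I4⟩ := inv_final (x := x) hN
  have hkey : ∀ p q : Event × Event, secondPassStep T x p q →
      tracePos T p.1 < tracePos T q.1 := by
    intro p q hpq
    exact (I2 (p.1, q.1) hpq.2).2.2.2.2
  refine ⟨?_, ?_, ?_, ?_⟩
  · intro e f h
    induction h with
    | base hm => exact (I3 _ hm).2.2
    | step _ hm ih => exact lt_trans (I2 _ hm).2.2.2.2 ih
  · have hwf : WellFounded (InvImage Nat.lt (fun p : Event × Event => tracePos T p.1)) :=
      InvImage.wf _ Nat.lt_wfRel.wf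
    exact Subrelation.wf (fun {p q} h => hkey p q h) hwf
  · have h3 : ∀ p q, Relation.TransGen (secondPassStep T x) p q →
        tracePos T p.1 < tracePos T q.1 := by
      intro p q h
      induction h with
      | single h => exact hkey _ _ h
      | tail _ h ih => exact lt_trans ih (hkey _ _ h)
    intro p hp
    exact lt_irrefl _ (h3 p p hp)
  · intro e f he hf hc hea hfa hpos hgf hfg
    have hflt : tracePos T f < T.length := List.idxOf_lt_length_iff.2 hf
    have hsplit : T = T.take (tracePos T f) ++ f :: T.drop (tracePos T f + 1) := by
      conv_lhs => rw [← List.take_append_drop (tracePos T f) T]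
      congr 1
      rw [List.drop_eq_getElem_cons hflt]
      congr 1
      exact List.getElem_idxOf hflt
    have heA : e ∈ T.take (tracePos T f) := by
      have hlen : tracePos T e < (T.take (tracePos T f)).length := by
        simp only [List.length_take]
        omega
      have : (T.take (tracePos T f))[tracePos T e]'hlen = e := by
        rw [List.getElem_take]
        exact List.getElem_idxOf (List.idxOf_lt_length_iff.2 he)
      exact this ▸ List.getElem_mem hlen
    exact complete_aux hT hsplit hfa (tracePos T f) e heA hea (by omega) hgf hfg
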